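/- arXiv:math/0701762 — 2 statements merged into one kernel-verified Lean document; each statement's English description precedes it below -/
import Mathlib

section
/- (Miquel's four-circle theorem) Let four circles in the Euclidean plane intersect sequentially at the pairs of points (1,5), (2,7), (3,6), (4,8): i.e., circle C₁ passes through 1,5,2,7; C₂ through 2,7,3,6; C₃ through 3,6,4,8; C₄ through 4,8,1,5. If the points 1,2,3,4 are concyclic (or collinear), then the points 5,6,7,8 are concyclic (or collinear). -/
set_option maxHeartbeats 1000000

open EuclideanGeometry

private lemma cosph4 {c : EuclideanSpace ℝ (Fin 2)} {r : ℝ}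
    {a b d e : EuclideanSpace ℝ (Fin 2)}
    (ha : a ∈ Metric.sphere c r) (hb : b ∈ Metric.sphere c r)
    (hd : d ∈ Metric.sphere c r) (he : e ∈ Metric.sphere c r) :
    Cospherical ({a, b, d, e} : Set (EuclideanSpace ℝ (Fin 2))) :=
  ⟨c, r, by rintro p (rfl | rfl | rfl | rfl) <;> assumption⟩

/-- Miquel's four-circle theorem. Four circles `C₁,…,C₄` in the Euclidean plane
meet sequentially in the pairs of points `(1,5)`, `(2,7)`, `(3,6)`, `(4,8)`:
`C₁` passes through `1,5,2,7`; `C₂` through `2,7,3,6`; `C₃` through `3,6,4,8`;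
`C₄` through `4,8,1,5`; consecutive circles meet exactly in the indicated pair,
and the eight points are pairwise distinct. If `1,2,3,4` are concyclic or
collinear, then so are `5,6,7,8`. -/
theorem miquel_four_circles
    (p1 p2 p3 p4 p5 p6 p7 p8 : EuclideanSpace ℝ (Fin 2))
    (c1 c2 c3 c4 : EuclideanSpace ℝ (Fin 2)) (r1 r2 r3 r4 : ℝ)
    (hr1 : 0 < r1) (hr2 : 0 < r2) (hr3 : 0 < r3) (hr4 : 0 < r4)
    (hdist : Function.Injective
      (fun i : Fin 8 => ![p1, p2, p3, p4, p5, p6, p7, p8] i))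
    (h1 : {p1, p5, p2, p7} ⊆ Metric.sphere c1 r1)
    (h2 : {p2, p7, p3, p6} ⊆ Metric.sphere c2 r2)
    (h3 : {p3, p6, p4, p8} ⊆ Metric.sphere c3 r3)
    (h4 : {p4, p8, p1, p5} ⊆ Metric.sphere c4 r4)
    (h41 : Metric.sphere c4 r4 ∩ Metric.sphere c1 r1 = {p1, p5})
    (h12 : Metric.sphere c1 r1 ∩ Metric.sphere c2 r2 = {p2, p7})
    (h23 : Metric.sphere c2 r2 ∩ Metric.sphere c3 r3 = {p3, p6})
    (h34 : Metric.sphere c3 r3 ∩ Metric.sphere c4 r4 = {p4, p8})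
    (hconc : Cospherical ({p1, p2, p3, p4} : Set (EuclideanSpace ℝ (Fin 2))) ∨
      Collinear ℝ ({p1, p2, p3, p4} : Set (EuclideanSpace ℝ (Fin 2)))) :
    Cospherical ({p5, p6, p7, p8} : Set (EuclideanSpace ℝ (Fin 2))) ∨
      Collinear ℝ ({p5, p6, p7, p8} : Set (EuclideanSpace ℝ (Fin 2))) := by
  haveI : Fact (Module.finrank ℝ (EuclideanSpace ℝ (Fin 2)) = 2) :=
    ⟨finrank_euclideanSpace_fin⟩
  haveI : Module.Oriented ℝ (EuclideanSpace ℝ (Fin 2)) (Fin 2) :=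
    ⟨(EuclideanSpace.basisFun (Fin 2) ℝ).toBasis.orientation⟩
  -- pairwise distinctness
  have hne : ∀ i j : Fin 8, i ≠ j →
      ![p1, p2, p3, p4, p5, p6, p7, p8] i ≠ ![p1, p2, p3, p4, p5, p6, p7, p8] j :=
    fun i j hij h => hij (hdist h)
  have h12' : p1 ≠ p2 := by simpa using hne 0 1 (by decide)
  have h14 : p1 ≠ p4 := by simpa using hne 0 3 (by decide)
  have h15 : p1 ≠ p5 := by simpa using hne 0 4 (by decide)
  have h21 : p2 ≠ p1 := h12'.symm
  have h24 : p2 ≠ p4 := by simpa using hne 1 3 (by decide)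
  have h27 : p2 ≠ p7 := by simpa using hne 1 6 (by decide)
  have h32 : p3 ≠ p2 := by simpa using hne 2 1 (by decide)
  have h34' : p3 ≠ p4 := by simpa using hne 2 3 (by decide)
  have h36 : p3 ≠ p6 := by simpa using hne 2 5 (by decide)
  have h45 : p4 ≠ p5 := by simpa using hne 3 4 (by decide)
  have h46 : p4 ≠ p6 := by simpa using hne 3 5 (by decide)
  have h48 : p4 ≠ p8 := by simpa using hne 3 7 (by decide)
  have h57 : p5 ≠ p7 := by simpa using hne 4 6 (by decide)
  have h58 : p5 ≠ p8 := by simpa using hne 4 7 (by decide)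
  have h67 : p6 ≠ p7 := by simpa using hne 5 6 (by decide)
  have h68 : p6 ≠ p8 := by simpa using hne 5 7 (by decide)
  have h75 : p7 ≠ p5 := h57.symm
  have h72 : p7 ≠ p2 := h27.symm
  have h76 : p7 ≠ p6 := h67.symm
  have h85 : p8 ≠ p5 := h58.symm
  have h84 : p8 ≠ p4 := h48.symm
  have h86 : p8 ≠ p6 := h68.symm
  -- sphere memberships
  have m1_1 : p1 ∈ Metric.sphere c1 r1 := h1 (by simp)
  have m1_5 : p5 ∈ Metric.sphere c1 r1 := h1 (by simp)
  have m1_2 : p2 ∈ Metric.sphere c1 r1 := h1 (by simp)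
  have m1_7 : p7 ∈ Metric.sphere c1 r1 := h1 (by simp)
  have m2_2 : p2 ∈ Metric.sphere c2 r2 := h2 (by simp)
  have m2_7 : p7 ∈ Metric.sphere c2 r2 := h2 (by simp)
  have m2_3 : p3 ∈ Metric.sphere c2 r2 := h2 (by simp)
  have m2_6 : p6 ∈ Metric.sphere c2 r2 := h2 (by simp)
  have m3_3 : p3 ∈ Metric.sphere c3 r3 := h3 (by simp)
  have m3_6 : p6 ∈ Metric.sphere c3 r3 := h3 (by simp)
  have m3_4 : p4 ∈ Metric.sphere c3 r3 := h3 (by simp)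
  have m3_8 : p8 ∈ Metric.sphere c3 r3 := h3 (by simp)
  have m4_4 : p4 ∈ Metric.sphere c4 r4 := h4 (by simp)
  have m4_8 : p8 ∈ Metric.sphere c4 r4 := h4 (by simp)
  have m4_1 : p1 ∈ Metric.sphere c4 r4 := h4 (by simp)
  have m4_5 : p5 ∈ Metric.sphere c4 r4 := h4 (by simp)
  -- inscribed angle equalities (mod π)
  have hA : (2 : ℤ) • ∡ p5 p7 p2 = (2 : ℤ) • ∡ p5 p1 p2 :=
    (cosph4 m1_5 m1_7 m1_1 m1_2).two_zsmul_oangle_eq h75 h72 h15 h12'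
  have hB : (2 : ℤ) • ∡ p2 p7 p6 = (2 : ℤ) • ∡ p2 p3 p6 :=
    (cosph4 m2_2 m2_7 m2_3 m2_6).two_zsmul_oangle_eq h72 h76 h32 h36
  have hC : (2 : ℤ) • ∡ p5 p8 p4 = (2 : ℤ) • ∡ p5 p1 p4 :=
    (cosph4 m4_5 m4_8 m4_1 m4_4).two_zsmul_oangle_eq h85 h84 h15 h14
  have hD : (2 : ℤ) • ∡ p4 p8 p6 = (2 : ℤ) • ∡ p4 p3 p6 :=
    (cosph4 m3_4 m3_8 m3_3 m3_6).two_zsmul_oangle_eq h84 h86 h34' h36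
  -- the hypothesis circle/line through p1 p2 p3 p4
  have hE : (2 : ℤ) • ∡ p2 p1 p4 = (2 : ℤ) • ∡ p2 p3 p4 := by
    rcases hconc with hcs | hcl
    · have hcs' : Cospherical ({p2, p1, p3, p4} : Set (EuclideanSpace ℝ (Fin 2))) := by
        have : ({p2, p1, p3, p4} : Set (EuclideanSpace ℝ (Fin 2))) = {p1, p2, p3, p4} := by
          ext x; simp; tauto
        rwa [this]
      exact hcs'.two_zsmul_oangle_eq h12' h14 h32 h34'
    · have l1 : Collinear ℝ ({p2, p1, p4} : Set (EuclideanSpace ℝ (Fin 2))) :=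
        hcl.subset (by rintro x (rfl | rfl | rfl) <;> simp)
      have l2 : Collinear ℝ ({p2, p3, p4} : Set (EuclideanSpace ℝ (Fin 2))) :=
        hcl.subset (by rintro x (rfl | rfl | rfl) <;> simp)
      have z1 : (2 : ℤ) • ∡ p2 p1 p4 = 0 :=
        Real.Angle.two_zsmul_eq_zero_iff.2
          (oangle_eq_zero_or_eq_pi_iff_collinear.2 l1)
      have z2 : (2 : ℤ) • ∡ p2 p3 p4 = 0 :=
        Real.Angle.two_zsmul_eq_zero_iff.2
          (oangle_eq_zero_or_eq_pi_iff_collinear.2 l2)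
      rw [z1, z2]
  -- angle additions
  have add7 : ∡ p5 p7 p2 + ∡ p2 p7 p6 = ∡ p5 p7 p6 := oangle_add h57 h27 h67
  have add8 : ∡ p5 p8 p4 + ∡ p4 p8 p6 = ∡ p5 p8 p6 := oangle_add h58 h48 h68
  have add1 : ∡ p5 p1 p2 + ∡ p2 p1 p4 = ∡ p5 p1 p4 := oangle_add h15.symm h21 h14.symm
  have add3 : ∡ p2 p3 p4 + ∡ p4 p3 p6 = ∡ p2 p3 p6 := oangle_add h32.symm h34'.symm h36.symm
  have s7 : (2 : ℤ) • ∡ p5 p7 p6 = (2 : ℤ) • ∡ p5 p7 p2 + (2 : ℤ) • ∡ p2 p7 p6 := by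
    rw [← add7, smul_add]
  have s8 : (2 : ℤ) • ∡ p5 p8 p6 = (2 : ℤ) • ∡ p5 p8 p4 + (2 : ℤ) • ∡ p4 p8 p6 := by
    rw [← add8, smul_add]
  have s1 : (2 : ℤ) • ∡ p5 p1 p4 = (2 : ℤ) • ∡ p5 p1 p2 + (2 : ℤ) • ∡ p2 p1 p4 := by
    rw [← add1, smul_add]
  have s3 : (2 : ℤ) • ∡ p2 p3 p6 = (2 : ℤ) • ∡ p2 p3 p4 + (2 : ℤ) • ∡ p4 p3 p6 := by
    rw [← add3, smul_add]
  -- main chase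
  have key : (2 : ℤ) • ∡ p5 p7 p6 = (2 : ℤ) • ∡ p5 p8 p6 := by
    rw [s7, s8, hA, hB, hC, hD, s3, s1, hE]; abel
  have := cospherical_or_collinear_of_two_zsmul_oangle_eq key
  have hset : ({p5, p7, p8, p6} : Set (EuclideanSpace ℝ (Fin 2))) = {p5, p6, p7, p8} := by
    ext x; simp; tauto
  rwa [hset] at this
end

section
/- (Miquel's five-circle theorem) Let 1,2,3,4,5 be five points in the plane, and for indices mod 5 let the vertex points be defined as line intersections 1' = line(2,3)∩line(5,1), 2' = line(1,2)∩line(3,4), 3' = line(2,3)∩line(4,5), 4' = line(3,4)∩line(5,1), 5' = line(4,5)∩line(1,2) (assume all these intersections exist and are unique). Let 1'' be the second intersection of circles (1,1',2) and (5,5',1); 2'' the second intersection of circles (2,2',3) and (1,1',2); 3'' of circles (3,3',4) and (2,2',3); 4'' of circles (4,4',5) and (3,3',4); 5'' of circles (5,5',1) and (4,4',5). Then the five points 1'',2'',3'',4'',5'' are concyclic. -/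
open EuclideanGeometry Module Affine

noncomputable section
namespace MiquelAux
abbrev Pt := EuclideanSpace ℝ (Fin 2)
instance : Fact (finrank ℝ Pt = 2) := ⟨finrank_euclideanSpace_fin⟩
instance : Module.Oriented ℝ Pt (Fin 2) := ⟨Basis.orientation (EuclideanSpace.basisFun (Fin 2) ℝ).toBasis⟩
abbrev CoC (S : Set Pt) : Prop := Cospherical S ∨ Collinear ℝ S

lemma coc3 (x y z : Pt) : CoC ({x,y,z} : Set Pt) := by
  have h := cospherical_or_collinear_of_two_zsmul_oangle_eq
    (rfl : (2:ℤ) • ∡ x y z = (2:ℤ) • ∡ x y z)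
  rwa [Set.insert_idem] at h

lemma ncol_on_sphere {c : Pt} {r : ℝ} {x y z : Pt} (hx : x ∈ Metric.sphere c r)
    (hy : y ∈ Metric.sphere c r) (hz : z ∈ Metric.sphere c r)
    (hxy : x ≠ y) (hxz : x ≠ z) (hyz : y ≠ z) :
    ¬ Collinear ℝ ({x, y, z} : Set Pt) := by
  have hcos : Cospherical ({x, y, z} : Set Pt) := by
    refine ⟨c, r, ?_⟩
    intro p hp
    rcases hp with h | h | h <;> subst h <;> assumption
  exact affineIndependent_iff_not_collinear_set.1 (hcos.affineIndependent_of_ne hxy hxz hyz)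

lemma line_circle {c : Pt} {r : ℝ} {u v x y z : Pt} (hx : x ∈ Metric.sphere c r)
    (hy : y ∈ Metric.sphere c r) (hz : z ∈ Metric.sphere c r)
    (hx' : x ∈ line[ℝ, u, v]) (hy' : y ∈ line[ℝ, u, v]) (hz' : z ∈ line[ℝ, u, v])
    (hxy : x ≠ y) (hxz : x ≠ z) (hyz : y ≠ z) : False :=
  ncol_on_sphere hx hy hz hxy hxz hyz
    (collinear_triple_of_mem_affineSpan_pair hx' hy' hz')

lemma sphere_eq_sphere {x y z : Pt} (hncol : ¬ Collinear ℝ ({x, y, z} : Set Pt))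
    {o o' : Pt} {ρ ρ' : ℝ}
    (hx : dist x o = ρ) (hy : dist y o = ρ) (hz : dist z o = ρ)
    (hx' : dist x o' = ρ') (hy' : dist y o' = ρ') (hz' : dist z o' = ρ') :
    o = o' ∧ ρ = ρ' := by
  have hind : AffineIndependent ℝ ![x, y, z] :=
    affineIndependent_iff_not_collinear_set.2 hncol
  let t : Triangle ℝ Pt := ⟨![x, y, z], hind⟩
  have htop : affineSpan ℝ (Set.range t.points) = ⊤ := by
    refine t.independent.affineSpan_eq_top_iff_card_eq_finrank_add_one.2 ?_
    simp [finrank_euclideanSpace_fin]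
  have key : ∀ (o₀ : Pt) (ρ₀ : ℝ), dist x o₀ = ρ₀ → dist y o₀ = ρ₀ → dist z o₀ = ρ₀ →
      (⟨o₀, ρ₀⟩ : EuclideanGeometry.Sphere Pt) = t.circumsphere := by
    intro o₀ ρ₀ h1 h2 h3
    refine t.circumsphere_unique_dist_eq.2 _ ⟨?_, ?_⟩
    · rw [htop]; trivial
    · intro p hp
      rcases Set.mem_range.1 hp with ⟨i, hi⟩
      fin_cases i <;> simp only [t] at hi <;> subst hi
      · simpa [dist_eq_norm] using h1
      · simpa [dist_eq_norm] using h2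
      · simpa [dist_eq_norm] using h3
  have e1 := key o ρ hx hy hz
  have e2 := key o' ρ' hx' hy' hz'
  have h := e1.trans e2.symm
  exact ⟨congrArg EuclideanGeometry.Sphere.center h,
    congrArg EuclideanGeometry.Sphere.radius h⟩

lemma second_pt {c c' : Pt} {r r' : ℝ}
    (hne : Metric.sphere c r ≠ Metric.sphere c' r') {a b x : Pt}
    (ha : a ∈ Metric.sphere c r) (ha' : a ∈ Metric.sphere c' r')
    (hb : b ∈ Metric.sphere c r) (hb' : b ∈ Metric.sphere c' r')
    (hx : x ∈ Metric.sphere c r) (hx' : x ∈ Metric.sphere c' r')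
    (hab : a ≠ b) : x = a ∨ x = b := by
  by_contra h
  push_neg at h
  obtain ⟨hxa, hxb⟩ := h
  have hncol := ncol_on_sphere ha hb hx hab (Ne.symm hxa) (Ne.symm hxb)
  obtain ⟨hc, hr⟩ := sphere_eq_sphere hncol
    (Metric.mem_sphere.1 ha) (Metric.mem_sphere.1 hb) (Metric.mem_sphere.1 hx)
    (Metric.mem_sphere.1 ha') (Metric.mem_sphere.1 hb') (Metric.mem_sphere.1 hx')
  exact hne (by rw [hc, hr])

lemma vspan_eq {u v a b : Pt} (ha : a ∈ line[ℝ, u, v]) (hb : b ∈ line[ℝ, u, v])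
    (hab : a ≠ b) : vectorSpan ℝ ({a, b} : Set Pt) = vectorSpan ℝ ({u, v} : Set Pt) := by
  have hmem : a -ᵥ b ∈ vectorSpan ℝ ({u, v} : Set Pt) := by
    rw [← direction_affineSpan]
    exact AffineSubspace.vsub_mem_direction ha hb
  rw [vectorSpan_pair] at hmem ⊢
  rw [vectorSpan_pair]
  rcases Submodule.mem_span_singleton.1 hmem with ⟨t, ht⟩
  have htne : t ≠ 0 := by
    rintro rfl
    simp only [zero_smul] at ht
    exact hab (by rwa [eq_comm, vsub_eq_zero_iff_eq] at ht)
  rw [← ht]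
  exact Submodule.span_singleton_smul_eq (IsUnit.mk0 t htne) _


set_option maxHeartbeats 1000000 in
/-- Main window lemma: the four shoulder points `s5, s1, s2, s3` are concyclic. -/
lemma window
    (p1 p2 p3 p4 p5 q1 q2 q3 q4 q5 s1 s2 s3 s4 s5 : Pt)
    (hq1 : (affineSpan ℝ {p2, p3} : Set Pt) ∩ affineSpan ℝ {p5, p1} = {q1})
    (hq2 : (affineSpan ℝ {p1, p2} : Set Pt) ∩ affineSpan ℝ {p3, p4} = {q2})
    (hq3 : (affineSpan ℝ {p2, p3} : Set Pt) ∩ affineSpan ℝ {p4, p5} = {q3})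
    (hq4 : (affineSpan ℝ {p3, p4} : Set Pt) ∩ affineSpan ℝ {p5, p1} = {q4})
    (hq5 : (affineSpan ℝ {p4, p5} : Set Pt) ∩ affineSpan ℝ {p1, p2} = {q5})
    (hnc1 : ¬ Collinear ℝ ({p1, q1, p2} : Set Pt))
    (hnc2 : ¬ Collinear ℝ ({p2, q2, p3} : Set Pt))
    (hnc3 : ¬ Collinear ℝ ({p3, q3, p4} : Set Pt))
    (hnc4 : ¬ Collinear ℝ ({p4, q4, p5} : Set Pt))
    (hnc5 : ¬ Collinear ℝ ({p5, q5, p1} : Set Pt))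
    (c1 c2 c3 c4 c5 : Pt) (r1 r2 r3 r4 r5 : ℝ)
    (hC1 : {p1, q1, p2} ⊆ Metric.sphere c1 r1)
    (hC2 : {p2, q2, p3} ⊆ Metric.sphere c2 r2)
    (hC3 : {p3, q3, p4} ⊆ Metric.sphere c3 r3)
    (hC4 : {p4, q4, p5} ⊆ Metric.sphere c4 r4)
    (hC5 : {p5, q5, p1} ⊆ Metric.sphere c5 r5)
    (hd1 : Metric.sphere c1 r1 ≠ Metric.sphere c5 r5)
    (hd2 : Metric.sphere c2 r2 ≠ Metric.sphere c1 r1)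
    (hd3 : Metric.sphere c3 r3 ≠ Metric.sphere c2 r2)
    (hd4 : Metric.sphere c4 r4 ≠ Metric.sphere c3 r3)
    (hd5 : Metric.sphere c5 r5 ≠ Metric.sphere c4 r4)
    (hs1 : s1 ∈ Metric.sphere c1 r1 ∩ Metric.sphere c5 r5) (hs1' : s1 ≠ p1)
    (hs2 : s2 ∈ Metric.sphere c2 r2 ∩ Metric.sphere c1 r1) (hs2' : s2 ≠ p2)
    (hs3 : s3 ∈ Metric.sphere c3 r3 ∩ Metric.sphere c2 r2) (hs3' : s3 ≠ p3)
    (hs4 : s4 ∈ Metric.sphere c4 r4 ∩ Metric.sphere c3 r3) (hs4' : s4 ≠ p4)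
    (hs5 : s5 ∈ Metric.sphere c5 r5 ∩ Metric.sphere c4 r4) (hs5' : s5 ≠ p5) :
    CoC ({s5, s1, s2, s3} : Set Pt) := by
  classical
  -- pairwise distinctness from the non-collinearity hypotheses
  have hp1q1 : p1 ≠ q1 := ne₁₂_of_not_collinear hnc1
  have hp1p2 : p1 ≠ p2 := ne₁₃_of_not_collinear hnc1
  have hq1p2 : q1 ≠ p2 := ne₂₃_of_not_collinear hnc1
  have hp2q2 : p2 ≠ q2 := ne₁₂_of_not_collinear hnc2
  have hp2p3 : p2 ≠ p3 := ne₁₃_of_not_collinear hnc2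
  have hq2p3 : q2 ≠ p3 := ne₂₃_of_not_collinear hnc2
  have hp3q3 : p3 ≠ q3 := ne₁₂_of_not_collinear hnc3
  have hp3p4 : p3 ≠ p4 := ne₁₃_of_not_collinear hnc3
  have hq3p4 : q3 ≠ p4 := ne₂₃_of_not_collinear hnc3
  have hp4q4 : p4 ≠ q4 := ne₁₂_of_not_collinear hnc4
  have hp4p5 : p4 ≠ p5 := ne₁₃_of_not_collinear hnc4
  have hq4p5 : q4 ≠ p5 := ne₂₃_of_not_collinear hnc4
  have hp5q5 : p5 ≠ q5 := ne₁₂_of_not_collinear hnc5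
  have hp5p1 : p5 ≠ p1 := ne₁₃_of_not_collinear hnc5
  have hq5p1 : q5 ≠ p1 := ne₂₃_of_not_collinear hnc5
  -- sphere memberships
  have mC1p1 : p1 ∈ Metric.sphere c1 r1 := hC1 (Set.mem_insert _ _)
  have mC1q1 : q1 ∈ Metric.sphere c1 r1 :=
    hC1 (Set.mem_insert_of_mem _ (Set.mem_insert _ _))
  have mC1p2 : p2 ∈ Metric.sphere c1 r1 :=
    hC1 (Set.mem_insert_of_mem _ (Set.mem_insert_of_mem _ rfl))
  have mC2p2 : p2 ∈ Metric.sphere c2 r2 := hC2 (Set.mem_insert _ _)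
  have mC2q2 : q2 ∈ Metric.sphere c2 r2 :=
    hC2 (Set.mem_insert_of_mem _ (Set.mem_insert _ _))
  have mC2p3 : p3 ∈ Metric.sphere c2 r2 :=
    hC2 (Set.mem_insert_of_mem _ (Set.mem_insert_of_mem _ rfl))
  have mC3p3 : p3 ∈ Metric.sphere c3 r3 := hC3 (Set.mem_insert _ _)
  have mC3q3 : q3 ∈ Metric.sphere c3 r3 :=
    hC3 (Set.mem_insert_of_mem _ (Set.mem_insert _ _))
  have mC3p4 : p4 ∈ Metric.sphere c3 r3 :=
    hC3 (Set.mem_insert_of_mem _ (Set.mem_insert_of_mem _ rfl))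
  have mC4p4 : p4 ∈ Metric.sphere c4 r4 := hC4 (Set.mem_insert _ _)
  have mC4q4 : q4 ∈ Metric.sphere c4 r4 :=
    hC4 (Set.mem_insert_of_mem _ (Set.mem_insert _ _))
  have mC4p5 : p5 ∈ Metric.sphere c4 r4 :=
    hC4 (Set.mem_insert_of_mem _ (Set.mem_insert_of_mem _ rfl))
  have mC5p5 : p5 ∈ Metric.sphere c5 r5 := hC5 (Set.mem_insert _ _)
  have mC5q5 : q5 ∈ Metric.sphere c5 r5 :=
    hC5 (Set.mem_insert_of_mem _ (Set.mem_insert _ _))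
  have mC5p1 : p1 ∈ Metric.sphere c5 r5 :=
    hC5 (Set.mem_insert_of_mem _ (Set.mem_insert_of_mem _ rfl))
  have mC1s1 := hs1.1
  have mC5s1 := hs1.2
  have mC2s2 := hs2.1
  have mC1s2 := hs2.2
  have mC3s3 := hs3.1
  have mC2s3 := hs3.2
  have mC4s4 := hs4.1
  have mC3s4 := hs4.2
  have mC5s5 := hs5.1
  have mC4s5 := hs5.2
  -- line memberships
  have hq1m : q1 ∈ (affineSpan ℝ {p2, p3} : Set Pt) ∩ affineSpan ℝ {p5, p1} := by
    rw [hq1]; rfl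
  have hq2m : q2 ∈ (affineSpan ℝ {p1, p2} : Set Pt) ∩ affineSpan ℝ {p3, p4} := by
    rw [hq2]; rfl
  have hq3m : q3 ∈ (affineSpan ℝ {p2, p3} : Set Pt) ∩ affineSpan ℝ {p4, p5} := by
    rw [hq3]; rfl
  have hq4m : q4 ∈ (affineSpan ℝ {p3, p4} : Set Pt) ∩ affineSpan ℝ {p5, p1} := by
    rw [hq4]; rfl
  have hq5m : q5 ∈ (affineSpan ℝ {p4, p5} : Set Pt) ∩ affineSpan ℝ {p1, p2} := by
    rw [hq5]; rfl
  have q1L2 : q1 ∈ line[ℝ, p2, p3] := hq1m.1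
  have q1L5 : q1 ∈ line[ℝ, p5, p1] := hq1m.2
  have q2L1 : q2 ∈ line[ℝ, p1, p2] := hq2m.1
  have q2L3 : q2 ∈ line[ℝ, p3, p4] := hq2m.2
  have q3L2 : q3 ∈ line[ℝ, p2, p3] := hq3m.1
  have q3L4 : q3 ∈ line[ℝ, p4, p5] := hq3m.2
  have q4L3 : q4 ∈ line[ℝ, p3, p4] := hq4m.1
  have q4L5 : q4 ∈ line[ℝ, p5, p1] := hq4m.2
  have q5L4 : q5 ∈ line[ℝ, p4, p5] := hq5m.1
  have q5L1 : q5 ∈ line[ℝ, p1, p2] := hq5m.2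
  -- intra-target degenerate cases: the conclusion is trivial
  by_cases h15 : s1 = s5
  · have hs : ({s5,s1,s2,s3} : Set Pt) = {s5,s2,s3} := by
      rw [h15] at *; ext p; simp only [Set.mem_insert_iff, Set.mem_singleton_iff]; tauto
    rw [hs]; exact coc3 _ _ _
  by_cases h12 : s1 = s2
  · have hs : ({s5,s1,s2,s3} : Set Pt) = {s5,s2,s3} := by
      rw [h12]; ext p; simp only [Set.mem_insert_iff, Set.mem_singleton_iff]; tauto
    rw [hs]; exact coc3 _ _ _
  by_cases h32 : s3 = s2
  · have hs : ({s5,s1,s2,s3} : Set Pt) = {s5,s1,s2} := by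
      rw [h32]; ext p; simp only [Set.mem_insert_iff, Set.mem_singleton_iff]; tauto
    rw [hs]; exact coc3 _ _ _
  by_cases h35 : s3 = s5
  · have hs : ({s5,s1,s2,s3} : Set Pt) = {s5,s1,s2} := by
      rw [h35]; ext p; simp only [Set.mem_insert_iff, Set.mem_singleton_iff]; tauto
    rw [hs]; exact coc3 _ _ _
  -- hard degenerate cases, each leads to a contradiction
  -- (1) q2 = p4
  have hq2p4 : q2 ≠ p4 := by
    intro h
    -- p4 lies on C2, hence p4 = s3 (second intersection of C2, C3)
    have m1 : p4 ∈ Metric.sphere c2 r2 := h ▸ mC2q2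
    have h34 : p4 = p3 ∨ p4 = s3 :=
      second_pt hd3 mC3p3 mC2p3 mC3s3 mC2s3 mC3p4 m1 (Ne.symm hs3')
    have hs3p4 : s3 = p4 := by
      rcases h34 with h' | h'
      · exact absurd h'.symm hp3p4
      · exact h'.symm
    -- p4 = q5 since p4 ∈ L4 ∩ L1
    have m2 : p4 ∈ (affineSpan ℝ {p4, p5} : Set Pt) ∩ affineSpan ℝ {p1, p2} :=
      ⟨left_mem_affineSpan_pair ℝ p4 p5, h ▸ q2L1⟩
    rw [hq5] at m2
    have hp4q5 : p4 = q5 := m2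
    -- hence p4 ∈ C5 and p4 = s5 (second intersection of C5, C4)
    have m3 : p4 ∈ Metric.sphere c5 r5 := hp4q5 ▸ mC5q5
    have h45 : p4 = p5 ∨ p4 = s5 :=
      second_pt hd5 mC5p5 mC4p5 mC5s5 mC4s5 m3 mC4p4 (Ne.symm hs5')
    rcases h45 with h' | h'
    · exact hp4p5 h'
    · exact h35 (hs3p4.trans h')
  -- (2) q2 = q5
  have hq2q5 : q2 ≠ q5 := by
    intro h
    have hz4 : q2 ∈ line[ℝ, p4, p5] := h ▸ q5L4
    have hz3 : q2 ∈ line[ℝ, p3, p4] := q2L3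
    -- all of L3 and L4 lie on the line through q2 and p4
    have col3 : Collinear ℝ ({q2, p3, p4} : Set Pt) :=
      collinear_triple_of_mem_affineSpan_pair hz3 (left_mem_affineSpan_pair ℝ p3 p4)
        (right_mem_affineSpan_pair ℝ p3 p4)
    have col4 : Collinear ℝ ({q2, p4, p5} : Set Pt) :=
      collinear_triple_of_mem_affineSpan_pair hz4 (left_mem_affineSpan_pair ℝ p4 p5)
        (right_mem_affineSpan_pair ℝ p4 p5)
    have col4' : Collinear ℝ ({q2, p4, q3} : Set Pt) :=
      collinear_triple_of_mem_affineSpan_pair hz4 (left_mem_affineSpan_pair ℝ p4 p5) q3L4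
    have hm3 : p3 ∈ line[ℝ, q2, p4] :=
      col3.mem_affineSpan_of_mem_of_ne (Set.mem_insert _ _)
        (Set.mem_insert_of_mem _ (Set.mem_insert_of_mem _ rfl))
        (Set.mem_insert_of_mem _ (Set.mem_insert _ _)) hq2p4
    have hmq3 : q3 ∈ line[ℝ, q2, p4] :=
      col4'.mem_affineSpan_of_mem_of_ne (Set.mem_insert _ _)
        (Set.mem_insert_of_mem _ (Set.mem_insert _ _))
        (Set.mem_insert_of_mem _ (Set.mem_insert_of_mem _ rfl)) hq2p4
    exact hnc3 (collinear_triple_of_mem_affineSpan_pair hm3 hmq3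
      (right_mem_affineSpan_pair ℝ q2 p4))
  -- (3) s3 = q2
  have hs3q2 : s3 ≠ q2 := by
    intro h
    have m1 : q2 ∈ Metric.sphere c3 r3 := h ▸ mC3s3
    exact line_circle m1 mC3p3 mC3p4 q2L3 (left_mem_affineSpan_pair ℝ p3 p4)
      (right_mem_affineSpan_pair ℝ p3 p4) hq2p3 hq2p4 hp3p4
  -- (3b) s3 = p4
  have hs3p4 : s3 ≠ p4 := by
    intro h
    have m1 : p4 ∈ Metric.sphere c2 r2 := h ▸ mC2s3
    exact line_circle m1 mC2p3 mC2q2 (right_mem_affineSpan_pair ℝ p3 p4)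
      (left_mem_affineSpan_pair ℝ p3 p4) q2L3 (Ne.symm hp3p4) (Ne.symm hq2p4) hq2p3.symm
  -- (4) p4 = q5
  have hp4q5 : p4 ≠ q5 := by
    intro h
    have m2 : p4 ∈ (affineSpan ℝ {p1, p2} : Set Pt) ∩ affineSpan ℝ {p3, p4} :=
      ⟨h ▸ q5L1, right_mem_affineSpan_pair ℝ p3 p4⟩
    rw [hq2] at m2
    exact hq2p4 (Eq.symm m2)
  -- (5) s5 = q5
  have hs5q5 : s5 ≠ q5 := by
    intro h
    have m1 : q5 ∈ Metric.sphere c4 r4 := h ▸ mC4s5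
    exact line_circle m1 mC4p4 mC4p5 q5L4 (left_mem_affineSpan_pair ℝ p4 p5)
      (right_mem_affineSpan_pair ℝ p4 p5) (Ne.symm hp4q5) (Ne.symm hp5q5) hp4p5
  -- (6) s5 = p4
  have hs5p4 : s5 ≠ p4 := by
    intro h
    have m1 : p4 ∈ Metric.sphere c5 r5 := h ▸ mC5s5
    exact line_circle m1 mC5q5 mC5p5 (left_mem_affineSpan_pair ℝ p4 p5) q5L4
      (right_mem_affineSpan_pair ℝ p4 p5) hp4q5 hp4p5 (Ne.symm hp5q5)
  -- (7) p1 = q5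
  have hp1q5 : p1 ≠ q5 := by
    intro h
    have hz : p1 ∈ line[ℝ, p4, p5] := h ▸ q5L4
    have col : Collinear ℝ ({p4, p5, p1} : Set Pt) :=
      collinear_triple_of_mem_affineSpan_pair (left_mem_affineSpan_pair ℝ p4 p5)
        (right_mem_affineSpan_pair ℝ p4 p5) hz
    have hm : p4 ∈ line[ℝ, p5, p1] :=
      col.mem_affineSpan_of_mem_of_ne
        (Set.mem_insert_of_mem _ (Set.mem_insert _ _))
        (Set.mem_insert_of_mem _ (Set.mem_insert_of_mem _ rfl))
        (Set.mem_insert _ _) hp5p1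
    have m2 : p4 ∈ (affineSpan ℝ {p3, p4} : Set Pt) ∩ affineSpan ℝ {p5, p1} :=
      ⟨right_mem_affineSpan_pair ℝ p3 p4, hm⟩
    rw [hq4] at m2
    exact hp4q4 m2
  -- ============ the auxiliary circle through q5, q2, p4, s5, s3 ============
  -- F1 : q5, s5, q2, p4 are concyclic
  set Y : Pt := (p5 -ᵥ p1) +ᵥ q2 with hY
  have hYq2 : Y -ᵥ q2 = p5 -ᵥ p1 := vadd_vsub _ _
  have hYne : Y ≠ q2 := by
    intro h
    apply hp5p1
    have h0 := hYq2
    rw [h, vsub_self] at h0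
    exact vsub_eq_zero_iff_eq.1 h0.symm
  have t7 : (2:ℤ) • ∡ q5 s5 p5 = (2:ℤ) • ∡ q5 p1 p5 :=
    Sphere.two_zsmul_oangle_eq (s := ⟨c5, r5⟩) mC5q5 mC5s5 mC5p1 mC5p5
      hs5q5 hs5' hp1q5 (Ne.symm hp5p1)
  have t8 : (2:ℤ) • ∡ p5 s5 p4 = (2:ℤ) • ∡ p5 q4 p4 :=
    Sphere.two_zsmul_oangle_eq (s := ⟨c4, r4⟩) mC4p5 mC4s5 mC4q4 mC4p4
      hs5' hs5p4 hq4p5 (Ne.symm hp4q4)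
  have vs1 : vectorSpan ℝ ({q5, p1} : Set Pt) = vectorSpan ℝ ({p1, p2} : Set Pt) :=
    vspan_eq q5L1 (left_mem_affineSpan_pair ℝ p1 p2) (Ne.symm hp1q5)
  have vs2 : vectorSpan ℝ ({q5, q2} : Set Pt) = vectorSpan ℝ ({p1, p2} : Set Pt) :=
    vspan_eq q5L1 q2L1 (Ne.symm hq2q5)
  have vs3 : vectorSpan ℝ ({Y, q2} : Set Pt) = vectorSpan ℝ ({p5, p1} : Set Pt) := by
    rw [vectorSpan_pair, vectorSpan_pair, hYq2]
  have vs4 : vectorSpan ℝ ({p5, q4} : Set Pt) = vectorSpan ℝ ({p5, p1} : Set Pt) :=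
    vspan_eq (left_mem_affineSpan_pair ℝ p5 p1) q4L5 (Ne.symm hq4p5)
  have vs5 : vectorSpan ℝ ({p4, q4} : Set Pt) = vectorSpan ℝ ({p3, p4} : Set Pt) :=
    vspan_eq (right_mem_affineSpan_pair ℝ p3 p4) q4L3 hp4q4
  have vs6 : vectorSpan ℝ ({p4, q2} : Set Pt) = vectorSpan ℝ ({p3, p4} : Set Pt) :=
    vspan_eq (right_mem_affineSpan_pair ℝ p3 p4) q2L3 (Ne.symm hq2p4)
  have reloc1 : (2:ℤ) • ∡ q5 p1 p5 = (2:ℤ) • ∡ q5 q2 Y :=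
    two_zsmul_oangle_of_vectorSpan_eq (vs1.trans vs2.symm) vs3.symm
  have reloc2 : (2:ℤ) • ∡ p5 q4 p4 = (2:ℤ) • ∡ Y q2 p4 :=
    two_zsmul_oangle_of_vectorSpan_eq (vs4.trans vs3.symm) (vs5.trans vs6.symm)
  have splitF1 : ∡ q5 s5 p5 + ∡ p5 s5 p4 = ∡ q5 s5 p4 :=
    oangle_add (Ne.symm hs5q5) (Ne.symm hs5') (Ne.symm hs5p4)
  have splitF1' : ∡ q5 q2 Y + ∡ Y q2 p4 = ∡ q5 q2 p4 :=
    oangle_add (Ne.symm hq2q5) hYne (Ne.symm hq2p4)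
  have f1ang : (2:ℤ) • ∡ q5 s5 p4 = (2:ℤ) • ∡ q5 q2 p4 := by
    calc (2:ℤ) • ∡ q5 s5 p4 = (2:ℤ) • (∡ q5 s5 p5 + ∡ p5 s5 p4) := by rw [splitF1]
    _ = (2:ℤ) • ∡ q5 s5 p5 + (2:ℤ) • ∡ p5 s5 p4 := smul_add _ _ _
    _ = (2:ℤ) • ∡ q5 q2 Y + (2:ℤ) • ∡ Y q2 p4 := by rw [t7, t8, reloc1, reloc2]
    _ = (2:ℤ) • (∡ q5 q2 Y + ∡ Y q2 p4) := (smul_add _ _ _).symm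
    _ = (2:ℤ) • ∡ q5 q2 p4 := by rw [splitF1']
  have f1 : CoC ({q5, s5, q2, p4} : Set Pt) :=
    cospherical_or_collinear_of_two_zsmul_oangle_eq f1ang
  -- F2 : q2, s3, q5, p4 are concyclic
  set Z : Pt := (p3 -ᵥ p2) +ᵥ q5 with hZ
  have hZq5 : Z -ᵥ q5 = p3 -ᵥ p2 := vadd_vsub _ _
  have hZne : Z ≠ q5 := by
    intro h
    apply hp2p3
    have h0 := hZq5
    rw [h, vsub_self] at h0
    exact (vsub_eq_zero_iff_eq.1 h0.symm).symm
  have t9 : (2:ℤ) • ∡ q2 s3 p3 = (2:ℤ) • ∡ q2 p2 p3 :=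
    Sphere.two_zsmul_oangle_eq (s := ⟨c2, r2⟩) mC2q2 mC2s3 mC2p2 mC2p3
      hs3q2 hs3' hp2q2 hp2p3
  have t10 : (2:ℤ) • ∡ p3 s3 p4 = (2:ℤ) • ∡ p3 q3 p4 :=
    Sphere.two_zsmul_oangle_eq (s := ⟨c3, r3⟩) mC3p3 mC3s3 mC3q3 mC3p4
      hs3' hs3p4 (Ne.symm hp3q3) hq3p4
  have vs7 : vectorSpan ℝ ({q2, p2} : Set Pt) = vectorSpan ℝ ({p1, p2} : Set Pt) :=
    vspan_eq q2L1 (right_mem_affineSpan_pair ℝ p1 p2) (Ne.symm hp2q2)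
  have vs8 : vectorSpan ℝ ({q2, q5} : Set Pt) = vectorSpan ℝ ({p1, p2} : Set Pt) :=
    vspan_eq q2L1 q5L1 hq2q5
  have vs9 : vectorSpan ℝ ({Z, q5} : Set Pt) = vectorSpan ℝ ({p3, p2} : Set Pt) := by
    rw [vectorSpan_pair, vectorSpan_pair, hZq5]
  have vs9b : vectorSpan ℝ ({p3, p2} : Set Pt) = vectorSpan ℝ ({p2, p3} : Set Pt) := by
    rw [Set.pair_comm]
  have vs10 : vectorSpan ℝ ({p3, q3} : Set Pt) = vectorSpan ℝ ({p2, p3} : Set Pt) :=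
    vspan_eq (right_mem_affineSpan_pair ℝ p2 p3) q3L2 hp3q3
  have vs11 : vectorSpan ℝ ({p4, q3} : Set Pt) = vectorSpan ℝ ({p4, p5} : Set Pt) :=
    vspan_eq (left_mem_affineSpan_pair ℝ p4 p5) q3L4 (Ne.symm hq3p4)
  have vs12 : vectorSpan ℝ ({p4, q5} : Set Pt) = vectorSpan ℝ ({p4, p5} : Set Pt) :=
    vspan_eq (left_mem_affineSpan_pair ℝ p4 p5) q5L4 hp4q5
  have reloc3 : (2:ℤ) • ∡ q2 p2 p3 = (2:ℤ) • ∡ q2 q5 Z :=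
    two_zsmul_oangle_of_vectorSpan_eq (vs7.trans vs8.symm) vs9.symm
  have reloc4 : (2:ℤ) • ∡ p3 q3 p4 = (2:ℤ) • ∡ Z q5 p4 :=
    two_zsmul_oangle_of_vectorSpan_eq (vs10.trans (vs9.trans vs9b).symm)
      (vs11.trans vs12.symm)
  have splitF2 : ∡ q2 s3 p3 + ∡ p3 s3 p4 = ∡ q2 s3 p4 :=
    oangle_add (Ne.symm hs3q2) (Ne.symm hs3') (Ne.symm hs3p4)
  have splitF2' : ∡ q2 q5 Z + ∡ Z q5 p4 = ∡ q2 q5 p4 :=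
    oangle_add hq2q5 hZne hp4q5
  have f2ang : (2:ℤ) • ∡ q2 s3 p4 = (2:ℤ) • ∡ q2 q5 p4 := by
    calc (2:ℤ) • ∡ q2 s3 p4 = (2:ℤ) • (∡ q2 s3 p3 + ∡ p3 s3 p4) := by rw [splitF2]
    _ = (2:ℤ) • ∡ q2 s3 p3 + (2:ℤ) • ∡ p3 s3 p4 := smul_add _ _ _
    _ = (2:ℤ) • ∡ q2 q5 Z + (2:ℤ) • ∡ Z q5 p4 := by rw [t9, t10, reloc3, reloc4]
    _ = (2:ℤ) • (∡ q2 q5 Z + ∡ Z q5 p4) := (smul_add _ _ _).symm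
    _ = (2:ℤ) • ∡ q2 q5 p4 := by rw [splitF2']
  have f2 : CoC ({q2, s3, q5, p4} : Set Pt) :=
    cospherical_or_collinear_of_two_zsmul_oangle_eq f2ang
  -- glue the two circles: q2, q5, p4 are not collinear, so they determine a circle
  have ncolD : ¬ Collinear ℝ ({q2, q5, p4} : Set Pt) := by
    intro hcol
    have hm : q2 ∈ line[ℝ, q5, p4] :=
      hcol.mem_affineSpan_of_mem_of_ne
        (Set.mem_insert_of_mem _ (Set.mem_insert _ _))
        (Set.mem_insert_of_mem _ (Set.mem_insert_of_mem _ rfl))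
        (Set.mem_insert _ _) (Ne.symm hp4q5)
    have hle : line[ℝ, q5, p4] ≤ line[ℝ, p4, p5] := by
      rw [affineSpan_le]
      intro x hx
      rcases hx with rfl | hx
      · exact q5L4
      · rw [Set.mem_singleton_iff] at hx
        rw [hx]
        exact left_mem_affineSpan_pair ℝ p4 p5
    have m2 : q2 ∈ (affineSpan ℝ {p4, p5} : Set Pt) ∩ affineSpan ℝ {p1, p2} :=
      ⟨hle hm, q2L1⟩
    rw [hq5] at m2
    exact hq2q5 m2
  have f1c : Cospherical ({q5, s5, q2, p4} : Set Pt) := by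
    rcases f1 with h | h
    · exact h
    · exact absurd (h.subset (by
        intro x hx
        rcases hx with rfl | rfl | rfl <;> simp)) ncolD
  have f2c : Cospherical ({q2, s3, q5, p4} : Set Pt) := by
    rcases f2 with h | h
    · exact h
    · exact absurd (h.subset (by
        intro x hx
        rcases hx with rfl | rfl | rfl <;> simp)) ncolD
  obtain ⟨o1, ρ1, hA⟩ := f1c
  obtain ⟨o2, ρ2, hB⟩ := f2c
  have dA_q5 : dist q5 o1 = ρ1 := hA q5 (Set.mem_insert _ _)
  have dA_s5 : dist s5 o1 = ρ1 := hA s5 (Set.mem_insert_of_mem _ (Set.mem_insert _ _))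
  have dA_q2 : dist q2 o1 = ρ1 :=
    hA q2 (Set.mem_insert_of_mem _ (Set.mem_insert_of_mem _ (Set.mem_insert _ _)))
  have dA_p4 : dist p4 o1 = ρ1 :=
    hA p4 (Set.mem_insert_of_mem _ (Set.mem_insert_of_mem _ (Set.mem_insert_of_mem _ rfl)))
  have dB_q2 : dist q2 o2 = ρ2 := hB q2 (Set.mem_insert _ _)
  have dB_s3 : dist s3 o2 = ρ2 := hB s3 (Set.mem_insert_of_mem _ (Set.mem_insert _ _))
  have dB_q5 : dist q5 o2 = ρ2 :=
    hB q5 (Set.mem_insert_of_mem _ (Set.mem_insert_of_mem _ (Set.mem_insert _ _)))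
  have dB_p4 : dist p4 o2 = ρ2 :=
    hB p4 (Set.mem_insert_of_mem _ (Set.mem_insert_of_mem _ (Set.mem_insert_of_mem _ rfl)))
  obtain ⟨ho, hρ⟩ := sphere_eq_sphere ncolD dA_q2 dA_q5 dA_p4 dB_q2 dB_q5 dB_p4
  rw [← ho] at dB_s3
  rw [← hρ] at dB_s3
  have t4 : (2:ℤ) • ∡ s5 s3 q2 = (2:ℤ) • ∡ s5 p4 q2 :=
    Sphere.two_zsmul_oangle_eq (s := ⟨o1, ρ1⟩)
      (Metric.mem_sphere.2 dA_s5) (Metric.mem_sphere.2 dB_s3)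
      (Metric.mem_sphere.2 dA_p4) (Metric.mem_sphere.2 dA_q2)
      h35 hs3q2 (Ne.symm hs5p4) (Ne.symm hq2p4)
  -- ============ the main chain ============
  have split1 : ∡ s5 s1 p1 + ∡ p1 s1 s2 = ∡ s5 s1 s2 :=
    oangle_add (Ne.symm h15) (Ne.symm hs1') (Ne.symm h12)
  have t1 : (2:ℤ) • ∡ s5 s1 p1 = (2:ℤ) • ∡ s5 p5 p1 :=
    Sphere.two_zsmul_oangle_eq (s := ⟨c5, r5⟩) mC5s5 mC5s1 mC5p5 mC5p1
      h15 hs1' (Ne.symm hs5') hp5p1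
  have t2 : (2:ℤ) • ∡ p1 s1 s2 = (2:ℤ) • ∡ p1 p2 s2 :=
    Sphere.two_zsmul_oangle_eq (s := ⟨c1, r1⟩) mC1p1 mC1s1 mC1p2 mC1s2
      hs1' h12 (Ne.symm hp1p2) (Ne.symm hs2')
  have mid1 : (2:ℤ) • ∡ s5 p5 p1 = (2:ℤ) • ∡ s5 p5 q4 :=
    Collinear.two_zsmul_oangle_eq_right
      (collinear_triple_of_mem_affineSpan_pair
        (right_mem_affineSpan_pair ℝ p5 p1) (left_mem_affineSpan_pair ℝ p5 p1) q4L5)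
      (Ne.symm hp5p1) hq4p5
  have mid2 : (2:ℤ) • ∡ s5 p5 q4 = (2:ℤ) • ∡ s5 p4 q4 :=
    Sphere.two_zsmul_oangle_eq (s := ⟨c4, r4⟩) mC4s5 mC4p5 mC4p4 mC4q4
      (Ne.symm hs5') (Ne.symm hq4p5) (Ne.symm hs5p4) hp4q4
  have mid3 : (2:ℤ) • ∡ s5 p4 q4 = (2:ℤ) • ∡ s5 p4 q2 :=
    Collinear.two_zsmul_oangle_eq_right
      (collinear_triple_of_mem_affineSpan_pair q4L3
        (right_mem_affineSpan_pair ℝ p3 p4) q2L3)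
      (Ne.symm hp4q4) hq2p4
  have lsub : (2:ℤ) • ∡ p1 p2 s2 = (2:ℤ) • ∡ q2 p2 s2 :=
    Collinear.two_zsmul_oangle_eq_left
      (collinear_triple_of_mem_affineSpan_pair
        (left_mem_affineSpan_pair ℝ p1 p2) (right_mem_affineSpan_pair ℝ p1 p2) q2L1)
      hp1p2 (Ne.symm hp2q2)
  have split2 : ∡ s5 s3 q2 + ∡ q2 s3 s2 = ∡ s5 s3 s2 :=
    oangle_add (Ne.symm h35) (Ne.symm hs3q2) (Ne.symm h32)
  have t3 : (2:ℤ) • ∡ q2 s3 s2 = (2:ℤ) • ∡ q2 p2 s2 :=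
    Sphere.two_zsmul_oangle_eq (s := ⟨c2, r2⟩) mC2q2 mC2s3 mC2p2 mC2s2
      hs3q2 h32 hp2q2 (Ne.symm hs2')
  have key : (2:ℤ) • ∡ s5 s1 s2 = (2:ℤ) • ∡ s5 s3 s2 := by
    calc (2:ℤ) • ∡ s5 s1 s2 = (2:ℤ) • (∡ s5 s1 p1 + ∡ p1 s1 s2) := by rw [split1]
    _ = (2:ℤ) • ∡ s5 s1 p1 + (2:ℤ) • ∡ p1 s1 s2 := smul_add _ _ _
    _ = (2:ℤ) • ∡ s5 p4 q2 + (2:ℤ) • ∡ q2 p2 s2 := by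
        rw [t1, t2, mid1, mid2, mid3, lsub]
    _ = (2:ℤ) • ∡ s5 s3 q2 + (2:ℤ) • ∡ q2 s3 s2 := by rw [t4, t3]
    _ = (2:ℤ) • (∡ s5 s3 q2 + ∡ q2 s3 s2) := (smul_add _ _ _).symm
    _ = (2:ℤ) • ∡ s5 s3 s2 := by rw [split2]
  have final := cospherical_or_collinear_of_two_zsmul_oangle_eq key
  rwa [Set.pair_comm s3 s2] at final
/-- Glue two windows around a non-collinear triple `x,y,z`. -/
lemma glue_pair {x y z w w' : Pt} (hncol : ¬ Collinear ℝ ({x, y, z} : Set Pt))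
    {S S' : Set Pt} (hS : CoC S) (hS' : CoC S')
    (hxS : x ∈ S) (hyS : y ∈ S) (hzS : z ∈ S) (hwS : w ∈ S)
    (hxS' : x ∈ S') (hyS' : y ∈ S') (hzS' : z ∈ S') (hwS' : w' ∈ S') :
    Cospherical ({x, y, z, w, w'} : Set Pt) := by
  have hsub : ({x, y, z} : Set Pt) ⊆ S := by
    intro p hp
    rcases hp with rfl | rfl | rfl
    · exact hxS
    · exact hyS
    · exact hzS
  have hsub' : ({x, y, z} : Set Pt) ⊆ S' := by
    intro p hp
    rcases hp with rfl | rfl | rfl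
    · exact hxS'
    · exact hyS'
    · exact hzS'
  rcases hS with hS | hS
  · rcases hS' with hS' | hS'
    · obtain ⟨o, ρ, h⟩ := hS
      obtain ⟨o', ρ', h'⟩ := hS'
      obtain ⟨rfl, rfl⟩ := sphere_eq_sphere hncol (h x hxS) (h y hyS) (h z hzS)
        (h' x hxS') (h' y hyS') (h' z hzS')
      refine ⟨o, ρ, ?_⟩
      intro p hp
      rcases hp with rfl | rfl | rfl | rfl | rfl
      · exact h p hxS
      · exact h p hyS
      · exact h p hzS
      · exact h p hwS
      · exact h' p hwS'
    · exact absurd (hS'.subset hsub') hncol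
  · exact absurd (hS.subset hsub) hncol

set_option maxHeartbeats 2000000 in
lemma glue5 {a b c d e : Pt}
    (h1 : CoC {e, a, b, c}) (h2 : CoC {a, b, c, d}) (h3 : CoC {b, c, d, e})
    (h4 : CoC {c, d, e, a}) (h5 : CoC {d, e, a, b}) :
    CoC {a, b, c, d, e} := by
  classical
  by_cases hab : a = b
  · have hs : ({a,b,c,d,e} : Set Pt) = {b,c,d,e} := by rw [hab]; clear h1 h2 h3 h4 h5; ext p; simp only [Set.mem_insert_iff, Set.mem_singleton_iff]; tauto
    rw [hs]; exact h3
  by_cases hac : a = c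
  · have hs : ({a,b,c,d,e} : Set Pt) = {b,c,d,e} := by rw [hac]; clear h1 h2 h3 h4 h5; ext p; simp only [Set.mem_insert_iff, Set.mem_singleton_iff]; tauto
    rw [hs]; exact h3
  by_cases had : a = d
  · have hs : ({a,b,c,d,e} : Set Pt) = {b,c,d,e} := by rw [had]; clear h1 h2 h3 h4 h5; ext p; simp only [Set.mem_insert_iff, Set.mem_singleton_iff]; tauto
    rw [hs]; exact h3
  by_cases hae : a = e
  · have hs : ({a,b,c,d,e} : Set Pt) = {b,c,d,e} := by rw [hae]; clear h1 h2 h3 h4 h5; ext p; simp only [Set.mem_insert_iff, Set.mem_singleton_iff]; tauto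
    rw [hs]; exact h3
  by_cases hbc : b = c
  · have hs : ({a,b,c,d,e} : Set Pt) = {c,d,e,a} := by rw [hbc]; clear h1 h2 h3 h4 h5; ext p; simp only [Set.mem_insert_iff, Set.mem_singleton_iff]; tauto
    rw [hs]; exact h4
  by_cases hbd : b = d
  · have hs : ({a,b,c,d,e} : Set Pt) = {c,d,e,a} := by rw [hbd]; clear h1 h2 h3 h4 h5; ext p; simp only [Set.mem_insert_iff, Set.mem_singleton_iff]; tauto
    rw [hs]; exact h4
  by_cases hbe : b = e
  · have hs : ({a,b,c,d,e} : Set Pt) = {c,d,e,a} := by rw [hbe]; clear h1 h2 h3 h4 h5; ext p; simp only [Set.mem_insert_iff, Set.mem_singleton_iff]; tauto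
    rw [hs]; exact h4
  by_cases hcd : c = d
  · have hs : ({a,b,c,d,e} : Set Pt) = {d,e,a,b} := by rw [hcd]; clear h1 h2 h3 h4 h5; ext p; simp only [Set.mem_insert_iff, Set.mem_singleton_iff]; tauto
    rw [hs]; exact h5
  by_cases hce : c = e
  · have hs : ({a,b,c,d,e} : Set Pt) = {d,e,a,b} := by rw [hce]; clear h1 h2 h3 h4 h5; ext p; simp only [Set.mem_insert_iff, Set.mem_singleton_iff]; tauto
    rw [hs]; exact h5
  by_cases hde : d = e
  · have hs : ({a,b,c,d,e} : Set Pt) = {a,b,c,d} := by rw [hde]; clear h1 h2 h3 h4 h5; ext p; simp only [Set.mem_insert_iff, Set.mem_singleton_iff]; tauto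
    rw [hs]; exact h2
  -- all five points distinct
  by_cases habc : Collinear ℝ ({a, b, c} : Set Pt)
  · by_cases habd : Collinear ℝ ({a, b, d} : Set Pt)
    · by_cases habe : Collinear ℝ ({a, b, e} : Set Pt)
      · right
        have hc : c ∈ line[ℝ, a, b] :=
          habc.mem_affineSpan_of_mem_of_ne (by simp) (by simp) (by simp) hab
        have hd : d ∈ line[ℝ, a, b] :=
          habd.mem_affineSpan_of_mem_of_ne (by simp) (by simp) (by simp) hab
        have he : e ∈ line[ℝ, a, b] :=
          habe.mem_affineSpan_of_mem_of_ne (by simp) (by simp) (by simp) hab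
        have := collinear_insert_insert_insert_of_mem_affineSpan_pair hc hd he
        have hs : ({c,d,e,a,b} : Set Pt) = {a,b,c,d,e} := by clear h1 h2 h3 h4 h5; ext p; simp only [Set.mem_insert_iff, Set.mem_singleton_iff]; tauto
        rwa [hs] at this
      · -- a, b, e not collinear : use windows h1 = {e,a,b,c} and h5 = {d,e,a,b}
        left
        have h := glue_pair (w := c) (w' := d) habe h1 h5 (by simp) (by simp) (by simp) (by simp)
          (by simp) (by simp) (by simp) (by simp)
        have hs : ({a,b,e,c,d} : Set Pt) = {a,b,c,d,e} := by clear h1 h2 h3 h4 h5; ext p; simp only [Set.mem_insert_iff, Set.mem_singleton_iff]; tauto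
        rwa [hs] at h
    · -- a, b, d not collinear : windows h2 = {a,b,c,d}, h5 = {d,e,a,b}
      left
      have h := glue_pair (w := c) (w' := e) habd h2 h5 (by simp) (by simp) (by simp) (by simp)
        (by simp) (by simp) (by simp) (by simp)
      have hs : ({a,b,d,c,e} : Set Pt) = {a,b,c,d,e} := by clear h1 h2 h3 h4 h5; ext p; simp only [Set.mem_insert_iff, Set.mem_singleton_iff]; tauto
      rwa [hs] at h
  · -- a, b, c not collinear : windows h2 = {a,b,c,d}, h1 = {e,a,b,c}
    left
    have h := glue_pair (w := d) (w' := e) habc h2 h1 (by simp) (by simp) (by simp) (by simp)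
      (by simp) (by simp) (by simp) (by simp)
    have hs : ({a,b,c,d,e} : Set Pt) = {a,b,c,d,e} := rfl
    exact h


end MiquelAux
end

open MiquelAux in
/-- Miquel's five-circle theorem. Given five points `p1,…,p5` of the plane,
the vertex points `q1,…,q5` are the (unique) intersections of the indicated
pairs of lines, and the five circumcircles of the wedges `(pᵢ, qᵢ, pᵢ₊₁)` meet
sequentially in the shoulder points `s1,…,s5` (the second intersection points,
distinct from the common armpit points).  Then the five shoulder points lie on
a common circle or line. -/
theorem miquel_five_circles
    (p1 p2 p3 p4 p5 q1 q2 q3 q4 q5 s1 s2 s3 s4 s5 : EuclideanSpace ℝ (Fin 2))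
    -- the vertices are the unique intersection points of the corresponding lines
    (hq1 : (affineSpan ℝ {p2, p3} : Set (EuclideanSpace ℝ (Fin 2))) ∩
      affineSpan ℝ {p5, p1} = {q1})
    (hq2 : (affineSpan ℝ {p1, p2} : Set (EuclideanSpace ℝ (Fin 2))) ∩
      affineSpan ℝ {p3, p4} = {q2})
    (hq3 : (affineSpan ℝ {p2, p3} : Set (EuclideanSpace ℝ (Fin 2))) ∩
      affineSpan ℝ {p4, p5} = {q3})
    (hq4 : (affineSpan ℝ {p3, p4} : Set (EuclideanSpace ℝ (Fin 2))) ∩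
      affineSpan ℝ {p5, p1} = {q4})
    (hq5 : (affineSpan ℝ {p4, p5} : Set (EuclideanSpace ℝ (Fin 2))) ∩
      affineSpan ℝ {p1, p2} = {q5})
    -- the triples defining the circumcircles are non-collinear
    (hnc1 : ¬ Collinear ℝ ({p1, q1, p2} : Set (EuclideanSpace ℝ (Fin 2))))
    (hnc2 : ¬ Collinear ℝ ({p2, q2, p3} : Set (EuclideanSpace ℝ (Fin 2))))
    (hnc3 : ¬ Collinear ℝ ({p3, q3, p4} : Set (EuclideanSpace ℝ (Fin 2))))
    (hnc4 : ¬ Collinear ℝ ({p4, q4, p5} : Set (EuclideanSpace ℝ (Fin 2))))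
    (hnc5 : ¬ Collinear ℝ ({p5, q5, p1} : Set (EuclideanSpace ℝ (Fin 2))))
    -- the five circumcircles
    (c1 c2 c3 c4 c5 : EuclideanSpace ℝ (Fin 2)) (r1 r2 r3 r4 r5 : ℝ)
    (hr1 : 0 < r1) (hr2 : 0 < r2) (hr3 : 0 < r3) (hr4 : 0 < r4) (hr5 : 0 < r5)
    (hC1 : {p1, q1, p2} ⊆ Metric.sphere c1 r1)
    (hC2 : {p2, q2, p3} ⊆ Metric.sphere c2 r2)
    (hC3 : {p3, q3, p4} ⊆ Metric.sphere c3 r3)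
    (hC4 : {p4, q4, p5} ⊆ Metric.sphere c4 r4)
    (hC5 : {p5, q5, p1} ⊆ Metric.sphere c5 r5)
    -- neighboring circumcircles are distinct
    (hd1 : Metric.sphere c1 r1 ≠ Metric.sphere c5 r5)
    (hd2 : Metric.sphere c2 r2 ≠ Metric.sphere c1 r1)
    (hd3 : Metric.sphere c3 r3 ≠ Metric.sphere c2 r2)
    (hd4 : Metric.sphere c4 r4 ≠ Metric.sphere c3 r3)
    (hd5 : Metric.sphere c5 r5 ≠ Metric.sphere c4 r4)
    -- the shoulder points: second intersections of neighboring circumcircles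
    (hs1 : s1 ∈ Metric.sphere c1 r1 ∩ Metric.sphere c5 r5) (hs1' : s1 ≠ p1)
    (hs2 : s2 ∈ Metric.sphere c2 r2 ∩ Metric.sphere c1 r1) (hs2' : s2 ≠ p2)
    (hs3 : s3 ∈ Metric.sphere c3 r3 ∩ Metric.sphere c2 r2) (hs3' : s3 ≠ p3)
    (hs4 : s4 ∈ Metric.sphere c4 r4 ∩ Metric.sphere c3 r3) (hs4' : s4 ≠ p4)
    (hs5 : s5 ∈ Metric.sphere c5 r5 ∩ Metric.sphere c4 r4) (hs5' : s5 ≠ p5) :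
    Cospherical ({s1, s2, s3, s4, s5} : Set (EuclideanSpace ℝ (Fin 2))) ∨
      Collinear ℝ ({s1, s2, s3, s4, s5} : Set (EuclideanSpace ℝ (Fin 2))) := by
  have h1 : CoC ({s5, s1, s2, s3} : Set Pt) :=
    window p1 p2 p3 p4 p5 q1 q2 q3 q4 q5 s1 s2 s3 s4 s5
      hq1 hq2 hq3 hq4 hq5 hnc1 hnc2 hnc3 hnc4 hnc5
      c1 c2 c3 c4 c5 r1 r2 r3 r4 r5 hC1 hC2 hC3 hC4 hC5
      hd1 hd2 hd3 hd4 hd5 hs1 hs1' hs2 hs2' hs3 hs3' hs4 hs4' hs5 hs5'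
  have h2 : CoC ({s1, s2, s3, s4} : Set Pt) :=
    window p2 p3 p4 p5 p1 q2 q3 q4 q5 q1 s2 s3 s4 s5 s1
      (by rw [Set.inter_comm]; exact hq2) hq3 hq4 hq5
      (by rw [Set.inter_comm]; exact hq1)
      hnc2 hnc3 hnc4 hnc5 hnc1
      c2 c3 c4 c5 c1 r2 r3 r4 r5 r1 hC2 hC3 hC4 hC5 hC1
      hd2 hd3 hd4 hd5 hd1 hs2 hs2' hs3 hs3' hs4 hs4' hs5 hs5' hs1 hs1'
  have h3 : CoC ({s2, s3, s4, s5} : Set Pt) :=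
    window p3 p4 p5 p1 p2 q3 q4 q5 q1 q2 s3 s4 s5 s1 s2
      (by rw [Set.inter_comm]; exact hq3) hq4 hq5
      (by rw [Set.inter_comm]; exact hq1) hq2
      hnc3 hnc4 hnc5 hnc1 hnc2
      c3 c4 c5 c1 c2 r3 r4 r5 r1 r2 hC3 hC4 hC5 hC1 hC2
      hd3 hd4 hd5 hd1 hd2 hs3 hs3' hs4 hs4' hs5 hs5' hs1 hs1' hs2 hs2'
  have h4 : CoC ({s3, s4, s5, s1} : Set Pt) :=
    window p4 p5 p1 p2 p3 q4 q5 q1 q2 q3 s4 s5 s1 s2 s3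
      (by rw [Set.inter_comm]; exact hq4) hq5
      (by rw [Set.inter_comm]; exact hq1) hq2 hq3
      hnc4 hnc5 hnc1 hnc2 hnc3
      c4 c5 c1 c2 c3 r4 r5 r1 r2 r3 hC4 hC5 hC1 hC2 hC3
      hd4 hd5 hd1 hd2 hd3 hs4 hs4' hs5 hs5' hs1 hs1' hs2 hs2' hs3 hs3'
  have h5 : CoC ({s4, s5, s1, s2} : Set Pt) :=
    window p5 p1 p2 p3 p4 q5 q1 q2 q3 q4 s5 s1 s2 s3 s4
      (by rw [Set.inter_comm]; exact hq5)
      (by rw [Set.inter_comm]; exact hq1) hq2 hq3 hq4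
      hnc5 hnc1 hnc2 hnc3 hnc4
      c5 c1 c2 c3 c4 r5 r1 r2 r3 r4 hC5 hC1 hC2 hC3 hC4
      hd5 hd1 hd2 hd3 hd4 hs5 hs5' hs1 hs1' hs2 hs2' hs3 hs3' hs4 hs4'
  exact glue5 h1 h2 h3 h4 h5
end
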